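/- Let h > 0, ω > 0, η_w > 0, and let H ≠ 0, L be real constants. Suppose V : [0, η_w] → ℝ is twice continuously differentiable, V(η) − h^(1/2)·η ≠ 0 on [0, η_w], and V satisfies the extended equation d²V/dη² + 3·(V − h^(1/2)η)^(−1)·(dV/dη − h^(1/2))² + (h²/5)·η·(V − h^(1/2)η)^(−3)·(dV/dη − h^(1/2)) + (h²/5)·(V − h^(1/2)η)^(−2) = 0 on (0, η_w), with free boundary conditions V(η_w) = h·H + h^(1/2)·η_w and dV/dη(η_w) = h^(1/2)·(L/(5H³) + 1). Define h* := ω·h, η_w* := ω^(1/2)·η_w, and V*(η*) := ω·V(ω^(−1/2)·η*) for η* ∈ [0, η_w*]. Then V* satisfies the same extended equation and the same two free boundary conditions with h replaced by h* and η_w replaced by η_w*, and moreover dV*/dη*(0) = ω^(1/2)·dV/dη(0). -/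

import Mathlib

set_option maxHeartbeats 1000000

/-- Unconditional chain rule for composition with multiplication by a nonzero
constant: if `f` is not differentiable at `c * x`, both sides are zero. -/
lemma deriv_comp_mul_const' (f : ℝ → ℝ) {c : ℝ} (hc : c ≠ 0) (x : ℝ) :
    deriv (fun y => f (c * y)) x = c * deriv f (c * x) := by
  by_cases hd : DifferentiableAt ℝ f (c * x)
  · have h1 : DifferentiableAt ℝ (fun y : ℝ => c * y) x :=
      (differentiableAt_id).const_mul c
    rw [show (fun y => f (c * y)) = f ∘ (fun y : ℝ => c * y) from rfl,
      deriv_comp x hd h1]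
    have : deriv (fun y : ℝ => c * y) x = c := by
      rw [deriv_const_mul_field]; simp
    rw [this, mul_comm]
  · rw [deriv_zero_of_not_differentiableAt hd, mul_zero,
      deriv_zero_of_not_differentiableAt]
    intro hcontra
    apply hd
    have h2 : DifferentiableAt ℝ (fun y : ℝ => c⁻¹ * y) (c * x) :=
      (differentiableAt_id).const_mul c⁻¹
    have hx : c⁻¹ * (c * x) = x := by field_simp
    have hcontra' : DifferentiableAt ℝ (fun y => f (c * y)) (c⁻¹ * (c * x)) := by
      rw [hx]; exact hcontra
    have := hcontra'.comp (c * x) h2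
    have heq : (fun y => f (c * y)) ∘ (fun y : ℝ => c⁻¹ * y) = f := by
      funext y
      simp only [Function.comp_apply]
      congr 1
      field_simp
    rwa [heq] at this

theorem stmt_18 (h ω ηw H L : ℝ) (hh : 0 < h) (hω : 0 < ω) (hηw : 0 < ηw)
    (hH : H ≠ 0) (V : ℝ → ℝ) (hV : ContDiffOn ℝ 2 V (Set.Icc 0 ηw))
    (hne : ∀ η ∈ Set.Icc (0 : ℝ) ηw, V η - h ^ ((1 : ℝ) / 2) * η ≠ 0)
    (hode : ∀ η ∈ Set.Ioo (0 : ℝ) ηw,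
      deriv (deriv V) η
        + 3 * (V η - h ^ ((1 : ℝ) / 2) * η)⁻¹ * (deriv V η - h ^ ((1 : ℝ) / 2)) ^ 2
        + (h ^ 2 / 5) * η * (V η - h ^ ((1 : ℝ) / 2) * η) ^ (-3 : ℤ)
          * (deriv V η - h ^ ((1 : ℝ) / 2))
        + (h ^ 2 / 5) * (V η - h ^ ((1 : ℝ) / 2) * η) ^ (-2 : ℤ) = 0)
    (hbc1 : V ηw = h * H + h ^ ((1 : ℝ) / 2) * ηw)
    (hbc2 : deriv V ηw = h ^ ((1 : ℝ) / 2) * (L / (5 * H ^ 3) + 1)) :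
    let hs := ω * h
    let ηws := ω ^ ((1 : ℝ) / 2) * ηw
    let Vs : ℝ → ℝ := fun η => ω * V (ω ^ (-(1 : ℝ) / 2) * η)
    (∀ η ∈ Set.Ioo (0 : ℝ) ηws,
      deriv (deriv Vs) η
        + 3 * (Vs η - hs ^ ((1 : ℝ) / 2) * η)⁻¹ * (deriv Vs η - hs ^ ((1 : ℝ) / 2)) ^ 2
        + (hs ^ 2 / 5) * η * (Vs η - hs ^ ((1 : ℝ) / 2) * η) ^ (-3 : ℤ)
          * (deriv Vs η - hs ^ ((1 : ℝ) / 2))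
        + (hs ^ 2 / 5) * (Vs η - hs ^ ((1 : ℝ) / 2) * η) ^ (-2 : ℤ) = 0)
    ∧ Vs ηws = hs * H + hs ^ ((1 : ℝ) / 2) * ηws
    ∧ deriv Vs ηws = hs ^ ((1 : ℝ) / 2) * (L / (5 * H ^ 3) + 1)
    ∧ deriv Vs 0 = ω ^ ((1 : ℝ) / 2) * deriv V 0 := by
  intro hs ηws Vs
  set a := ω ^ ((1 : ℝ) / 2) with ha_def
  set b := ω ^ (-(1 : ℝ) / 2) with hb_def
  have ha : 0 < a := Real.rpow_pos_of_pos hω _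
  have hb : 0 < b := Real.rpow_pos_of_pos hω _
  have hab : a * b = 1 := by
    rw [ha_def, hb_def, ← Real.rpow_add hω]; norm_num
  have haa : a * a = ω := by
    rw [ha_def, ← Real.rpow_add hω]; norm_num
  have hωb : ω * b = a := by
    have : ω * b = a * a * b := by rw [haa]
    rw [this, mul_assoc, hab, mul_one]
  have hhs : hs ^ ((1 : ℝ) / 2) = a * h ^ ((1 : ℝ) / 2) := by
    show (ω * h) ^ ((1 : ℝ) / 2) = a * h ^ ((1 : ℝ) / 2)
    rw [Real.mul_rpow hω.le hh.le]
  -- first derivative scaling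
  have dVs : ∀ x : ℝ, deriv Vs x = a * deriv V (b * x) := by
    intro x
    have : deriv Vs x = ω * deriv (fun y => V (b * y)) x := by
      exact deriv_const_mul_field (v := fun y => V (b * y)) (x := x) ω
    rw [this, deriv_comp_mul_const' V hb.ne' x, ← mul_assoc, hωb]
  -- second derivative scaling
  have ddVs : ∀ x : ℝ, deriv (deriv Vs) x = deriv (deriv V) (b * x) := by
    intro x
    have h1 : deriv Vs = fun y => a * deriv V (b * y) := funext dVs
    rw [h1]
    have : deriv (fun y => a * deriv V (b * y)) x
        = a * deriv (fun y => deriv V (b * y)) x :=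
      deriv_const_mul_field (v := fun y => deriv V (b * y)) (x := x) a
    rw [this, deriv_comp_mul_const' (deriv V) hb.ne' x, ← mul_assoc, hab, one_mul]
  have hbηws : b * ηws = ηw := by
    show b * (a * ηw) = ηw
    rw [← mul_assoc, mul_comm b a, hab, one_mul]
  refine ⟨?_, ?_, ?_, ?_⟩
  · intro η hη
    obtain ⟨hη0, hηw'⟩ := hη
    set t := b * η with ht_def
    have htmem : t ∈ Set.Ioo (0 : ℝ) ηw := by
      constructor
      · exact mul_pos hb hη0
      · calc t = b * η := rfl
          _ < b * ηws := by apply mul_lt_mul_of_pos_left hηw' hb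
          _ = ηw := hbηws
    have hηat : η = a * t := by
      rw [ht_def, ← mul_assoc, hab, one_mul]
    have hD : V t - h ^ ((1 : ℝ) / 2) * t ≠ 0 :=
      hne t (Set.mem_Icc_of_Ioo htmem)
    have hVst : Vs η = ω * V t := rfl
    have hDs : Vs η - hs ^ ((1 : ℝ) / 2) * η
        = ω * (V t - h ^ ((1 : ℝ) / 2) * t) := by
      rw [hVst, hhs, hηat]
      ring_nf
      rw [← haa]; ring
    have hEs : deriv Vs η - hs ^ ((1 : ℝ) / 2)
        = a * (deriv V t - h ^ ((1 : ℝ) / 2)) := by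
      rw [dVs η, ← ht_def, hhs]; ring
    have hode' := hode t htmem
    rw [ddVs η, ← ht_def, hDs, hEs, hηat]
    set D := V t - h ^ ((1 : ℝ) / 2) * t
    set E := deriv V t - h ^ ((1 : ℝ) / 2)
    have key : deriv (deriv V) t
        + 3 * (ω * D)⁻¹ * (a * E) ^ 2
        + (hs ^ 2 / 5) * (a * t) * (ω * D) ^ (-3 : ℤ) * (a * E)
        + (hs ^ 2 / 5) * (ω * D) ^ (-2 : ℤ)
        = deriv (deriv V) t
        + 3 * D⁻¹ * E ^ 2
        + (h ^ 2 / 5) * t * D ^ (-3 : ℤ) * E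
        + (h ^ 2 / 5) * D ^ (-2 : ℤ) := by
      have hω0 : ω ≠ 0 := hω.ne'
      have e3 : ∀ y : ℝ, y ^ (-3 : ℤ) = (y ^ 3)⁻¹ := fun y => by
        rw [zpow_neg]; norm_cast
      have e2 : ∀ y : ℝ, y ^ (-2 : ℤ) = (y ^ 2)⁻¹ := fun y => by
        rw [zpow_neg]; norm_cast
      rw [e3, e2, e3, e2, show hs = ω * h from rfl, ← haa]
      field_simp
    rw [key, hode']
  · show Vs ηws = hs * H + hs ^ ((1 : ℝ) / 2) * ηws
    have : Vs ηws = ω * V ηw := by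
      show ω * V (b * ηws) = ω * V ηw
      rw [hbηws]
    rw [this, hbc1, hhs]
    show ω * (h * H + h ^ ((1 : ℝ) / 2) * ηw) = ω * h * H + a * h ^ ((1 : ℝ) / 2) * (a * ηw)
    rw [← haa]; ring
  · rw [dVs ηws, hbηws, hbc2, hhs]; ring
  · rw [dVs 0, mul_zero]
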